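/- For an integer m ≥ 2, there exists H > 0 with 2·arccot(H) < 2π/m < √2π/((1+H²)^{1/4}(H+√(1+H²))^{1/2}) if and only if cot(π/m) < H < (m²-2)/(2√(m²-1)). -/
import Mathlib

open Real

lemma gmono (a b : ℝ) (ha : 0 ≤ a) (hab : a < b) :
    Real.sqrt (1+a^2)*(a+Real.sqrt (1+a^2)) < Real.sqrt (1+b^2)*(b+Real.sqrt (1+b^2)) := by
  have hsa : 0 < Real.sqrt (1+a^2) := Real.sqrt_pos.2 (by positivity)
  have h1 : Real.sqrt (1+a^2) < Real.sqrt (1+b^2) :=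
    Real.sqrt_lt_sqrt (by positivity) (by nlinarith)
  have h2 : a + Real.sqrt (1+a^2) ≤ b + Real.sqrt (1+b^2) := by linarith
  exact mul_lt_mul h1 h2 (by linarith) (by positivity)

set_option maxHeartbeats 1000000 in
theorem stmt18 (m : ℕ) (hm : 2 ≤ m) (H : ℝ) (hH : 0 < H) :
    (2 * (π / 2 - Real.arctan H) < 2 * π / m ∧
      2 * π / m < Real.sqrt 2 * π /
        ((1 + H ^ 2) ^ ((1 : ℝ) / 4) * (H + Real.sqrt (1 + H ^ 2)) ^ ((1 : ℝ) / 2))) ↔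
    (Real.cot (π / m) < H ∧ H < ((m : ℝ) ^ 2 - 2) / (2 * Real.sqrt ((m : ℝ) ^ 2 - 1))) := by
  have hM : (2:ℝ) ≤ (m:ℝ) := by exact_mod_cast hm
  have hMpos : (0:ℝ) < (m:ℝ) := by linarith
  have hpi := Real.pi_pos
  -- Left inequality
  have hL : (2 * (π / 2 - Real.arctan H) < 2 * π / m) ↔ Real.cot (π / m) < H := by
    have hx2 : π/(m:ℝ) ≤ π/2 := by
      apply div_le_div_of_nonneg_left hpi.le (by norm_num) hM
    have hx1 : 0 < π/(m:ℝ) := by positivity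
    have hcot : Real.cot (π/(m:ℝ)) = Real.tan (π/2 - π/(m:ℝ)) := by
      rw [Real.tan_pi_div_two_sub, Real.cot_eq_cos_div_sin, Real.tan_eq_sin_div_cos, inv_div]
    have harc : Real.arctan (Real.cot (π/(m:ℝ))) = π/2 - π/(m:ℝ) := by
      rw [hcot, Real.arctan_tan (by linarith) (by linarith)]
    have h1 : 2 * (π / 2 - Real.arctan H) < 2 * π / (m:ℝ) ↔ π/2 - π/(m:ℝ) < Real.arctan H := by
      rw [mul_div_assoc]
      constructor <;> intro h <;> linarith
    rw [h1, ← harc]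
    exact Real.arctan_strictMono.lt_iff_lt
  -- Right inequality
  set s := Real.sqrt (1 + H^2) with hs
  have hspos : 0 < s := Real.sqrt_pos.2 (by positivity)
  have hs2 : s^2 = 1 + H^2 := Real.sq_sqrt (by positivity)
  set D := (1 + H ^ 2) ^ ((1 : ℝ) / 4) * (H + s) ^ ((1 : ℝ) / 2) with hD
  have hDpos : 0 < D := by
    apply mul_pos <;> apply Real.rpow_pos_of_pos <;> [positivity; linarith]
  have hD2 : D^2 = s * (H + s) := by
    rw [hD, mul_pow, ← Real.rpow_natCast ((1+H^2) ^ ((1:ℝ)/4)) 2,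
      ← Real.rpow_natCast ((H+s) ^ ((1:ℝ)/2)) 2,
      ← Real.rpow_mul (by positivity), ← Real.rpow_mul (by linarith)]
    norm_num
    exact Or.inl (by rw [← Real.sqrt_eq_rpow, ← hs])
  clear_value s D
  set r := Real.sqrt ((m:ℝ)^2 - 1) with hrdef
  have hr2 : r^2 = (m:ℝ)^2 - 1 := Real.sq_sqrt (by nlinarith)
  have hrpos : 0 < r := Real.sqrt_pos.2 (by nlinarith)
  set H₀ := ((m:ℝ)^2 - 2)/(2*r) with hH₀
  have hH₀nn : 0 ≤ H₀ := by
    apply div_nonneg (by nlinarith) (by linarith)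
  have hs₀ : Real.sqrt (1 + H₀^2) = (m:ℝ)^2/(2*r) := by
    rw [show 1 + H₀^2 = ((m:ℝ)^2/(2*r))^2 by
      rw [hH₀]; field_simp; nlinarith [hr2]]
    exact Real.sqrt_sq (by positivity)
  have hg₀ : Real.sqrt (1 + H₀^2) * (H₀ + Real.sqrt (1 + H₀^2)) = (m:ℝ)^2/2 := by
    rw [hs₀, hH₀]
    field_simp
    nlinarith [hr2]
  clear_value r H₀
  have hR : (2 * π / m < Real.sqrt 2 * π / D) ↔ H < H₀ := by
    have step1 : (2 * π / (m:ℝ) < Real.sqrt 2 * π / D) ↔ D < Real.sqrt 2 * (m:ℝ) / 2 := by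
      rw [div_lt_div_iff₀ hMpos hDpos]
      constructor <;> intro h <;> nlinarith [hpi]
    have h2 : (Real.sqrt 2 * (m:ℝ) / 2)^2 = (m:ℝ)^2/2 := by
      rw [div_pow, mul_pow, Real.sq_sqrt (by norm_num : (0:ℝ) ≤ 2)]
      ring
    have step2 : D < Real.sqrt 2 * (m:ℝ) / 2 ↔ s * (H + s) < (m:ℝ)^2/2 := by
      rw [← hD2, ← h2]
      exact (pow_lt_pow_iff_left₀ hDpos.le (by positivity) two_ne_zero).symm
    rw [step1, step2]
    constructor
    · intro h
      by_contra hle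
      push_neg at hle
      rcases eq_or_lt_of_le hle with heq | hlt
      · rw [hs, ← heq] at h
        rw [hg₀] at h
        linarith
      · have := gmono H₀ H hH₀nn hlt
        rw [hg₀, hs] at *
        linarith [this]
    · intro h
      have := gmono H H₀ hH.le h
      rw [hg₀] at this
      rw [hs]
      linarith [this]
  rw [hL, hR, hH₀]
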